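/- In the dual space S_C, for every x,y ∈ S_C one has [x,y] ⊆ I(x,y) ⊆ N([x,y], 1), where N(·,1) denotes the closed 1-neighbourhood in the metric d_C. -/

import Mathlib

/-!
Common definitions: coarse geometry (hyperbolicity, rough geodesics, stable cylinders,
quasi-isometries, quasitrees, coarse medians), word metrics, spaces with walls,
dualisable systems and their dual spaces, walls of quasitrees coming from balls,
and the induced wall structures on images of spaces in products of quasitrees.
-/

open Set Metric

namespace GSC

universe u v w

variable {X Y : Type*}

/-- The Gromov product `⟨y,z⟩_w` with respect to the distance function `d`. -/
noncomputable def gp (d : X → X → ℝ) (w y z : X) : ℝ := (d w y + d w z - d y z) / 2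

/-- `d` satisfies the four-point `δ`-hyperbolicity condition. -/
def IsHyp (d : X → X → ℝ) (δ : ℝ) : Prop :=
  ∀ w x y z : X, min (gp d w x y) (gp d w y z) - δ ≤ gp d w x z

/-- `γ`, restricted to `[a,b]`, is a `k`-rough geodesic from `x` to `y`:
a `(1,k)`-quasi-isometric embedding of an interval joining `x` to `y`. -/
def IsRG (d : X → X → ℝ) (k : ℝ) (x y : X) (γ : ℝ → X) (a b : ℝ) : Prop :=
  a ≤ b ∧ γ a = x ∧ γ b = y ∧
    ∀ s ∈ Icc a b, ∀ t ∈ Icc a b, abs (d (γ s) (γ t) - |s - t|) ≤ k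

/-- `X` is `k`-roughly geodesic: any two points are joined by a `k`-rough geodesic. -/
def RGSpace (d : X → X → ℝ) (k : ℝ) : Prop :=
  ∀ x y : X, ∃ γ a b, IsRG d k x y γ a b

/-- The (closed) ball of radius `r` about `x` for the distance function `d`. -/
def rball (d : X → X → ℝ) (x : X) (r : ℝ) : Set X := {p | d x p ≤ r}

/-- `C` is a choice of `θ`-cylinders (with respect to `δ`-rough geodesics): for all `x,y`,
every `δ`-rough geodesic from `x` to `y` is contained in `C x y`, and `C x y` is contained
in the `θ`-neighbourhood of every `δ`-rough geodesic from `x` to `y`. -/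
def IsCylinders (d : X → X → ℝ) (δ θ : ℝ) (C : X → X → Set X) : Prop :=
  ∀ x y γ a b, IsRG d δ x y γ a b →
    γ '' Icc a b ⊆ C x y ∧ ∀ p ∈ C x y, ∃ q ∈ γ '' Icc a b, d p q ≤ θ

/-- The choice of cylinders `C` is globally `(k,R)`-stable: it is reversible, and for any
`x,y,z` the cylinders `C x y` and `C x z` agree inside the ball of radius `⟨y,z⟩ₓ` about `x`
after removing `k` balls of radius `R`. -/
def IsStable (d : X → X → ℝ) (k : ℕ) (R : ℝ) (C : X → X → Set X) : Prop :=
  (∀ x y, C x y = C y x) ∧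
    ∀ x y z : X, ∃ B : Fin k → X,
      (C x y ∩ rball d x (gp d x y z)) \ (⋃ i, rball d (B i) R) =
      (C x z ∩ rball d x (gp d x y z)) \ (⋃ i, rball d (B i) R)

/-- `μ` is a coarse median (coarse centre of triangles) for the hyperbolic distance `d`:
the distance of `μ x y z` to each vertex agrees with the corresponding Gromov product up
to the additive error `c`. -/
def IsCoarseMedian (d : X → X → ℝ) (μ : X → X → X → X) (c : ℝ) : Prop :=
  ∀ x y z : X,
    |d x (μ x y z) - gp d x y z| ≤ c ∧
    |d y (μ x y z) - gp d y x z| ≤ c ∧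
    |d z (μ x y z) - gp d z x y| ≤ c

/-- `f` is a `lam`-quasi-isometric embedding from `(X,dX)` to `(Y,dY)`. -/
def IsQIE (dX : X → X → ℝ) (dY : Y → Y → ℝ) (f : X → Y) (lam : ℝ) : Prop :=
  ∀ x x' : X, dX x x' / lam - lam ≤ dY (f x) (f x') ∧ dY (f x) (f x') ≤ lam * dX x x' + lam

/-- `f` is a `lam`-quasi-isometry from `(X,dX)` to `(Y,dY)`. -/
def IsQI (dX : X → X → ℝ) (dY : Y → Y → ℝ) (f : X → Y) (lam : ℝ) : Prop :=
  IsQIE dX dY f lam ∧ ∀ y : Y, ∃ x : X, dY (f x) y ≤ lam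

/-- `(T,d)` is a quasitree (with constant `lam`): it is roughly geodesic and
quasi-isometric to a simplicial tree. -/
def IsQuasitree {T : Type u} (d : T → T → ℝ) (lam : ℝ) : Prop :=
  RGSpace d lam ∧
    ∃ (V : Type u) (Γ : SimpleGraph V), Γ.IsTree ∧
      ∃ f : T → V, IsQIE d (fun a b => (Γ.dist a b : ℝ)) f lam ∧
        ∀ v : V, ∃ t : T, (Γ.dist v (f t) : ℝ) ≤ lam

/-- The `ℓ¹` distance on a finite product. -/
noncomputable def l1distF {m : ℕ} {T : Fin m → Type*} (dT : ∀ i, T i → T i → ℝ)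
    (p q : ∀ i, T i) : ℝ := ∑ i, dT i (p i) (q i)

/-- The word metric on a group `G` with respect to a generating set `A`
(the distance function of the Cayley graph of `(G,A)`). -/
noncomputable def wordDist {G : Type*} [Group G] (A : Set G) (g h : G) : ℝ :=
  (sInf {n : ℕ | ∃ l : List G, l.length = n ∧ (∀ a ∈ l, a ∈ A ∨ a⁻¹ ∈ A) ∧
    l.prod = g⁻¹ * h} : ℕ)

/-- `(X, dX, μX)`, with the `G`-action `ρ`, admits a `G`-equivariant quasimedian
quasi-isometric embedding into a product of `m` quasitrees (with the `ℓ¹` metric and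
coordinatewise coarse median); i.e. the strong quasitree rank of `(X,G)` is at most `m`. -/
def HasStrongQT {G : Type*} [Group G] {X : Type u} (ρ : G →* Equiv.Perm X)
    (dX : X → X → ℝ) (μX : X → X → X → X) (m : ℕ) : Prop :=
  ∃ (T : Fin m → Type u) (dT : ∀ i, T i → T i → ℝ) (μT : ∀ i, T i → T i → T i → T i)
    (f : X → ∀ i, T i) (α : G →* Equiv.Perm (∀ i, T i)) (lam c : ℝ),
      (∀ i, IsQuasitree (dT i) lam) ∧
      (∀ i, IsCoarseMedian (dT i) (μT i) c) ∧
      IsQIE dX (l1distF dT) f lam ∧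
      (∀ x y z : X, l1distF dT (fun i => μT i (f x i) (f y i) (f z i)) (f (μX x y z)) ≤ c) ∧
      (∀ (g : G) p q, l1distF dT (α g p) (α g q) = l1distF dT p q) ∧
      (∀ (g : G) x, f (ρ g x) = α g (f x))

/-! ### Sets with walls, ultrafilters and dualisable systems

A wall on a set `X` is a bipartition into two halfspaces.  We model a collection of
walls as a collection `H` of halfspaces (subsets of `X`) that is closed under
complementation; the wall corresponding to a halfspace `h` is the bipartition `{h, hᶜ}`. -/

/-- `H` is a collection of halfspaces closed under complementation (a set of walls). -/
def WallClosed (H : Set (Set X)) : Prop := ∀ h ∈ H, hᶜ ∈ H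

/-- `x` is an ultrafilter on the walls `H`: a consistent choice of one halfspace of every
wall of `H`. -/
def IsUF (H : Set (Set X)) (x : Set (Set X)) : Prop :=
  x ⊆ H ∧ (∀ h ∈ H, (h ∈ x ↔ hᶜ ∉ x)) ∧ ∀ h ∈ x, ∀ k ∈ H, h ⊆ k → k ∈ x

/-- The principal ultrafilter of a point `s`: the halfspaces containing `s`. -/
def pUF (H : Set (Set X)) (s : X) : Set (Set X) := {h ∈ H | s ∈ h}

/-- The set `c` of walls separates the ultrafilters `x` and `y`: they orient every
wall of `c` oppositely. -/
def Seps (x y c : Set (Set X)) : Prop := ∀ h ∈ c, (h ∈ x ↔ h ∉ y)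

/-- `d_D(x,y) = sup { |c| : c ∈ D separates x from y }`. -/
noncomputable def dD (D : Set (Set (Set X))) (x y : Set (Set X)) : ℕ∞ :=
  ⨆ (c : Set (Set X)) (_ : c ∈ D ∧ Seps x y c), c.encard

/-- The real-valued version of `dD` (equal to it whenever `dD` is finite). -/
noncomputable def dDr (D : Set (Set (Set X))) (x y : Set (Set X)) : ℝ :=
  ((dD D x y).toNat : ℝ)

/-- `D` is a dualisable system on the set with walls `(X,H)`. -/
def IsDualisable (H : Set (Set X)) (D : Set (Set (Set X))) : Prop :=
  (∀ c ∈ D, c ⊆ H) ∧ (∀ h ∈ H, ({h} : Set (Set X)) ∈ D) ∧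
    (∀ c ∈ D, ∀ c' ⊆ c, c' ∈ D) ∧
    ∀ s t : X, dD D (pUF H s) (pUF H t) < ⊤

/-- The dual space `X_D`: all ultrafilters at finite `d_D`-distance from the principal
ultrafilters of points of `X`. -/
def dualSpace (H : Set (Set X)) (D : Set (Set (Set X))) : Set (Set (Set X)) :=
  {x | IsUF H x ∧ ∀ s : X, dD D x (pUF H s) < ⊤}

/-- `c` is a chain of walls: the walls of `c` can be oriented so that the chosen
halfspaces are totally ordered by strict inclusion (equivalently, each wall separates
its neighbours). -/
def IsChain' (c : Set (Set X)) : Prop :=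
  ∃ σ : Set X → Set X, (∀ h ∈ c, σ h = h ∨ σ h = hᶜ) ∧
    ∀ h ∈ c, ∀ k ∈ c, h ≠ k → σ h ⊂ σ k ∨ σ k ⊂ σ h

/-- The walls of `h` and `k` cross: all four quarterspaces are nonempty. -/
def Crosses (h k : Set X) : Prop :=
  (h ∩ k).Nonempty ∧ (h ∩ kᶜ).Nonempty ∧ (hᶜ ∩ k).Nonempty ∧ (hᶜ ∩ kᶜ).Nonempty

/-- `c₁ ∪ c₂` is a chain in which all of `c₁` precedes all of `c₂`
(i.e. `c₁ ⊆ c₂⁻`). -/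
def ChainPrec (c₁ c₂ : Set (Set X)) : Prop :=
  ∃ σ : Set X → Set X, (∀ h ∈ c₁ ∪ c₂, σ h = h ∨ σ h = hᶜ) ∧
    (∀ h ∈ c₁ ∪ c₂, ∀ k ∈ c₁ ∪ c₂, h ≠ k → σ h ⊂ σ k ∨ σ k ⊂ σ h) ∧
    ∀ h ∈ c₁, ∀ k ∈ c₂, σ h ⊆ σ k

/-- `D` is `m`-gluable. -/
def Gluable (D : Set (Set (Set X))) (m : ℕ) : Prop :=
  ∀ c₁ ∈ D, ∀ c₂ ∈ D, ChainPrec c₁ c₂ →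
    ∃ e ⊆ c₁ ∪ c₂, e.encard ≤ (m : ℕ∞) ∧ (c₁ ∪ c₂) \ e ∈ D

/-- `D` is `L`-separated. -/
def Separated (D : Set (Set (Set X))) (L : ℕ) : Prop :=
  ∀ h₁ h₂ : Set X, ({h₁, h₂} : Set (Set X)) ∈ D → h₁ ≠ h₂ →
    ∀ c ∈ D, (∀ k ∈ c, Crosses k h₁ ∧ Crosses k h₂) → c.encard ≤ (L : ℕ∞)

/-- The median of three ultrafilters, given by majority vote on each wall. -/
def medUF (x y z : Set (Set X)) : Set (Set X) := x ∩ y ∪ x ∩ z ∪ y ∩ z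

/-- The halfspace `h` (with `x` on the `h`-side) separates `x` from the set `A` of
ultrafilters. -/
def SepsFromSet (x : Set (Set X)) (A : Set (Set (Set X))) (h : Set X) : Prop :=
  h ∈ x ∧ ∀ a ∈ A, h ∉ a

/-- The gate map to `A`: `gateMap A x` is obtained from `x` by reversing exactly the
walls separating `x` from `A`. -/
def gateMap (A : Set (Set (Set X))) (x : Set (Set X)) : Set (Set X) :=
  {h | (h ∈ x ∧ ¬ SepsFromSet x A h) ∨ (h ∉ x ∧ SepsFromSet x A hᶜ)}

/-- `A` is a gated subset of the dual space: it is nonempty and is the intersection of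
the dual space with a collection of halfspaces. -/
def IsGated (H : Set (Set X)) (D : Set (Set (Set X))) (A : Set (Set (Set X))) : Prop :=
  A.Nonempty ∧ ∃ H' ⊆ H, A = {x ∈ dualSpace H D | H' ⊆ x}

/-- The halfspace `h`, regarded as a subset of the dual space. -/
def halfSet (H : Set (Set X)) (D : Set (Set (Set X))) (h : Set X) : Set (Set (Set X)) :=
  {x ∈ dualSpace H D | h ∈ x}

/-! ### Walls of a quasitree coming from balls -/

variable (T : Type*) [MetricSpace T]

/-- `h` is (a halfspace of) one of the two walls of `T` determined by a connected
component `Ct` of the complement of the `K`-ball centred at `t`, namely the bipartitions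
`(Ct, T ∖ Ct)` and `(Ct ∪ B, T ∖ (Ct ∪ B))`. -/
def wallFromBall (K : ℝ) (t : T) (h : Set T) : Prop :=
  ∃ Ct : Set T, (∃ p ∈ (closedBall t K)ᶜ, Ct = connectedComponentIn (closedBall t K)ᶜ p) ∧
    (h = Ct ∨ h = Ctᶜ ∨ h = Ct ∪ closedBall t K ∨ h = (Ct ∪ closedBall t K)ᶜ)

/-- The walls of `T` determined by complementary components of `K`-balls. -/
def ballWalls (K : ℝ) : Set (Set T) := {h | ∃ t : T, wallFromBall T K t h}

/-- Disparate chains of ball-walls: chains of walls admitting defining `K`-balls whose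
centres are pairwise at distance at least `10K`. -/
def disparateChains (K : ℝ) : Set (Set (Set T)) :=
  {c | IsChain' c ∧ ∃ β : Set T → T, (∀ h ∈ c, wallFromBall T K (β h) h) ∧
    ∀ h ∈ c, ∀ k ∈ c, h ≠ k → 10 * K ≤ dist (β h) (β k)}

/-! ### The image of a space in a product of dual quasitrees, and its walls -/

variable {m : ℕ}

/-- The image `S` of `X` in the product `∏ T_{D_i}` of the dual quasitrees: tuples of
principal ultrafilters of the coordinates of points `f x`. -/
def SProd (T : Fin m → Type v) [∀ i, MetricSpace (T i)] (K : Fin m → ℝ)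
    (f : X → ∀ i, T i) : Type _ :=
  {p : ∀ i, Set (Set (T i)) // ∃ x : X, p = fun i => pUF (ballWalls (T i) (K i)) (f x i)}

/-- The natural map `X → S`. -/
def sEmb (T : Fin m → Type v) [∀ i, MetricSpace (T i)] (K : Fin m → ℝ)
    (f : X → ∀ i, T i) (x : X) : SProd T K f :=
  ⟨fun i => pUF (ballWalls (T i) (K i)) (f x i), ⟨x, rfl⟩⟩

/-- The `ℓ¹` metric on `S ⊆ ∏ T_{D_i}`. -/
noncomputable def dS (T : Fin m → Type v) [∀ i, MetricSpace (T i)] (K : Fin m → ℝ)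
    (f : X → ∀ i, T i) (p q : SProd T K f) : ℝ :=
  ∑ i, dDr (disparateChains (T i) (K i)) (p.1 i) (q.1 i)

/-- The halfspace of `S` induced by the halfspace `h` of the `i`-th factor. -/
def indHalf (T : Fin m → Type v) [∀ i, MetricSpace (T i)] (K : Fin m → ℝ)
    (f : X → ∀ i, T i) (i : Fin m) (h : Set (T i)) : Set (SProd T K f) :=
  {s | h ∈ s.1 i}

/-- The walls `W` on `S` induced by the ball-walls of the factors; two such walls cross
exactly when `S` meets all four quarterspaces. -/
def indWalls (T : Fin m → Type v) [∀ i, MetricSpace (T i)] (K : Fin m → ℝ)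
    (f : X → ∀ i, T i) : Set (Set (SProd T K f)) :=
  {A | ∃ (i : Fin m) (h : Set (T i)), h ∈ ballWalls (T i) (K i) ∧
    (A = indHalf T K f i h ∨ A = (indHalf T K f i h)ᶜ)}

/-- The monochromatic collections of walls of `S` of colour `i`: images of disparate
chains of the `i`-th factor. -/
def indMono (T : Fin m → Type v) [∀ i, MetricSpace (T i)] (K : Fin m → ℝ)
    (f : X → ∀ i, T i) (i : Fin m) : Set (Set (Set (SProd T K f))) :=
  {d | ∃ c ∈ disparateChains (T i) (K i), d = (indHalf T K f i) '' c}

/-- `D¹`: unions, over the factors, of (induced) disparate chains. -/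
def bigD1 (T : Fin m → Type v) [∀ i, MetricSpace (T i)] (K : Fin m → ℝ)
    (f : X → ∀ i, T i) : Set (Set (Set (SProd T K f))) :=
  {d | ∃ e : ∀ _ : Fin m, Set (Set (SProd T K f)),
    (∀ i, e i ∈ indMono T K f i) ∧ d = ⋃ i, e i}

/-- `D`: the elements of `D¹` that are chains. -/
def bigD (T : Fin m → Type v) [∀ i, MetricSpace (T i)] (K : Fin m → ℝ)
    (f : X → ∀ i, T i) : Set (Set (Set (SProd T K f))) :=
  {d ∈ bigD1 T K f | IsChain' d}

/-- `d` is an `L`-chain with respect to the system `D`: any member of `D` all of whose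
elements cross two given elements of `d` has cardinality at most `L`. -/
def LChainIn {Z : Type*} (D : Set (Set (Set Z))) (L : ℕ) (d : Set (Set Z)) : Prop :=
  ∀ h ∈ d, ∀ k ∈ d, ∀ d' ∈ D, (∀ w ∈ d', Crosses w h ∧ Crosses w k) →
    d'.encard ≤ (L : ℕ∞)

/-- `C`: the `L`-chains of `D`. -/
def bigC (T : Fin m → Type v) [∀ i, MetricSpace (T i)] (K : Fin m → ℝ)
    (f : X → ∀ i, T i) (L : ℕ) : Set (Set (Set (SProd T K f))) :=
  {d ∈ bigD T K f | LChainIn (bigD T K f) L d}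

/-! ### Intervals, distant walls and gates in the dual space `S_C` -/

variable {Z : Type*}

/-- `H(x,y)`: the walls not separating `x` from `y`, oriented (i.e. represented by the
halfspace) so that both `x` and `y` choose them. -/
def Hxy (W : Set (Set Z)) (x y : Set (Set Z)) : Set (Set Z) := {h ∈ W | h ∈ x ∧ h ∈ y}

/-- The interval `[x,y] = ∩_{h ∈ H(x,y)} h⁺` in the dual space. -/
def interval (W : Set (Set Z)) (D : Set (Set (Set Z))) (x y : Set (Set Z)) :
    Set (Set (Set Z)) :=
  {z ∈ dualSpace W D | Hxy W x y ⊆ z}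

/-- `H^L(x,y)`: the distant walls, i.e. the walls of `H(x,y)` such that every
monochromatic chain of `Cc` separating `x` from `y` and crossing them has length at
most `L`. -/
def distantWalls (W : Set (Set Z)) (Cc : Set (Set (Set Z))) (Mono : Set (Set Z) → Prop)
    (L : ℕ) (x y : Set (Set Z)) : Set (Set Z) :=
  {h ∈ Hxy W x y | ∀ c ∈ Cc, Mono c → Seps x y c → (∀ w ∈ c, Crosses w h) →
    c.encard ≤ (L : ℕ∞)}

/-- `I(x,y) = ∩_{h ∈ H^L(x,y)} h⁺`. -/
def Ixy (W : Set (Set Z)) (Cc : Set (Set (Set Z))) (Mono : Set (Set Z) → Prop)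
    (L : ℕ) (x y : Set (Set Z)) : Set (Set (Set Z)) :=
  {z ∈ dualSpace W Cc | distantWalls W Cc Mono L x y ⊆ z}

/-- The halfspace `h⁻`, regarded as a subset of the dual space (the ultrafilters not
choosing `h`). -/
def negSide (W : Set (Set Z)) (D : Set (Set (Set Z))) (h : Set Z) : Set (Set (Set Z)) :=
  {x ∈ dualSpace W D | h ∉ x}

/-- `H^L_t(x,y)`: the distant walls whose gate to `[x,y]` lies in the ball of radius `t`
about `x`. -/
def HLt (W : Set (Set Z)) (Cc : Set (Set (Set Z))) (Mono : Set (Set Z) → Prop)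
    (L : ℕ) (x y : Set (Set Z)) (t : ℝ) : Set (Set Z) :=
  {h ∈ distantWalls W Cc Mono L x y |
    ∀ u ∈ gateMap (interval W Cc x y) '' negSide W Cc h, dDr Cc x u ≤ t}

/-! ### Auxiliary lemmas for Statement 15 -/

section AuxStatement15

/-- Members of an ultrafilter never come with their complements. -/
lemma uf_compl_not_mem {W x : Set (Set Z)} (hx : IsUF W x) {h : Set Z} (hh : h ∈ x) :
    hᶜ ∉ x := (hx.2.1 h (hx.1 hh)).mp hh

/-- An ultrafilter contains the complement of every wall it does not contain. -/
lemma uf_compl_mem {W x : Set (Set Z)} (hx : IsUF W x) {h : Set Z} (hW : h ∈ W)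
    (hh : h ∉ x) : hᶜ ∈ x := by
  by_contra hc; exact hh ((hx.2.1 h hW).mpr hc)

/-- Ultrafilters are upwards closed. -/
lemma uf_up {W x : Set (Set Z)} (hx : IsUF W x) {h k : Set Z} (hh : h ∈ x) (hk : k ∈ W)
    (hsub : h ⊆ k) : k ∈ x := hx.2.2 h hh k hk hsub

/-- Crossing is invariant under replacing a wall by its complement. -/
lemma crosses_compl_right {w h : Set Z} (hc : Crosses w h) : Crosses w hᶜ := by
  obtain ⟨a, b, c, d⟩ := hc
  exact ⟨b, by rwa [compl_compl], d, by rwa [compl_compl]⟩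

/-- If every wall of a chain separating the ultrafilters `x` and `y` crosses `b`,
and `a ⊆ b` is a halfspace chosen by both `x` and `y`, then each such wall also
crosses `a`. -/
lemma cross_of_subset {W x y : Set (Set Z)} (WC : WallClosed W)
    (hx : IsUF W x) (hy : IsUF W y) {a b w : Set Z}
    (haW : a ∈ W) (hax : a ∈ x) (hay : a ∈ y) (hab : a ⊆ b)
    (hwW : w ∈ W) (hsepw : w ∈ x ↔ w ∉ y) (hcw : Crosses w b) : Crosses w a := by
  obtain ⟨q1, q2, q3, q4⟩ := hcw
  have hbc : bᶜ ⊆ aᶜ := compl_subset_compl.mpr hab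
  refine ⟨?_, q2.mono (inter_subset_inter_right _ hbc), ?_,
    q4.mono (inter_subset_inter_right _ hbc)⟩
  · by_contra hne
    have hwa : w ⊆ aᶜ := fun p hp hpa => hne ⟨p, hp, hpa⟩
    rcases Classical.em (w ∈ x) with hwx | hwx
    · exact uf_compl_not_mem hx hax (uf_up hx hwx (WC a haW) hwa)
    · have hwy : w ∈ y := by by_contra hwy; exact hwx (hsepw.mpr hwy)
      exact uf_compl_not_mem hy hay (uf_up hy hwy (WC a haW) hwa)
  · by_contra hne
    have haw : a ⊆ w := fun p hp => by by_contra hpw; exact hne ⟨p, hpw, hp⟩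
    exact (hsepw.mp (uf_up hx hax hwW haw)) (uf_up hy hay hwW haw)

/-- The abstract version of Statement 15: it only uses structural properties of the
system `D` of chains (closure under subsets, chain condition, `L`-chain condition),
and no geometry. -/
lemma abstract_main {W : Set (Set Z)} {D : Set (Set (Set Z))} {L : ℕ}
    {Mono : Set (Set Z) → Prop}
    (WC : WallClosed W)
    (hW : ∀ c ∈ D, c ⊆ W)
    (hsub : ∀ c ∈ D, ∀ c' ⊆ c, c' ∈ D)
    (hchain : ∀ c ∈ D, IsChain' c)
    (hLC : ∀ c ∈ D, LChainIn D L c)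
    (x y : Set (Set Z)) (hx : x ∈ dualSpace W D) (hy : y ∈ dualSpace W D) :
    interval W D x y ⊆ Ixy W D Mono L x y ∧
      ∀ z ∈ Ixy W D Mono L x y, ∃ u ∈ interval W D x y, dD D z u ≤ (1 : ℕ∞) := by
  have hxUF := hx.1
  have hyUF := hy.1
  constructor
  · rintro z ⟨hzd, hzH⟩
    exact ⟨hzd, fun h hh => hzH hh.1⟩
  · rintro z ⟨⟨hzUF, hzfin⟩, hzI⟩
    classical
    set u : Set (Set Z) := {h | h ∈ Hxy W x y ∨ (h ∈ z ∧ hᶜ ∉ Hxy W x y)} with hu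
    have hHW : Hxy W x y ⊆ W := fun h hh => hh.1
    have hHx : ∀ h ∈ Hxy W x y, h ∈ x := fun h hh => hh.2.1
    have hHy : ∀ h ∈ Hxy W x y, h ∈ y := fun h hh => hh.2.2
    have hHcompl : ∀ h ∈ Hxy W x y, hᶜ ∉ Hxy W x y := fun h hh hch =>
      uf_compl_not_mem hxUF (hHx h hh) (hHx _ hch)
    have hHu : Hxy W x y ⊆ u := fun h hh => Or.inl hh
    have huUF : IsUF W u := by
      refine ⟨?_, ?_, ?_⟩
      · rintro h (hh | ⟨hhz, -⟩)
        · exact hHW hh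
        · exact hzUF.1 hhz
      · intro h hhW
        constructor
        · rintro (hh | ⟨hhz, hhc⟩) (hc | ⟨hcz, hcc⟩)
          · exact hHcompl h hh hc
          · exact hcc (by rwa [compl_compl])
          · exact hhc hc
          · exact (hzUF.2.1 h hhW).mp hhz hcz
        · intro hcu
          by_cases hh : h ∈ Hxy W x y
          · exact Or.inl hh
          · by_cases hhc : hᶜ ∈ Hxy W x y
            · exact absurd (Or.inl hhc) hcu
            · have hhz : h ∈ z := by
                by_contra hhz
                have hcz : hᶜ ∈ z := uf_compl_mem hzUF hhW hhz
                exact hcu (Or.inr ⟨hcz, by rwa [compl_compl]⟩)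
              exact Or.inr ⟨hhz, hhc⟩
      · rintro h (hh | ⟨hhz, hhc⟩) k hkW hsubk
        · exact Or.inl ⟨hkW, uf_up hxUF (hHx h hh) hkW hsubk,
            uf_up hyUF (hHy h hh) hkW hsubk⟩
        · refine Or.inr ⟨uf_up hzUF hhz hkW hsubk, fun hkc => ?_⟩
          have hsubc : kᶜ ⊆ hᶜ := compl_subset_compl.mpr hsubk
          have hhW : h ∈ W := hzUF.1 hhz
          exact hhc ⟨WC h hhW, uf_up hxUF (hHx _ hkc) (WC h hhW) hsubc,
            uf_up hyUF (hHy _ hkc) (WC h hhW) hsubc⟩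
    -- every wall separating z from u is a non-distant wall of H(x,y)
    have hwall : ∀ c ∈ D, Seps z u c → ∀ h ∈ c,
        ∃ h₀, h₀ ∈ Hxy W x y ∧ h₀ ∉ z ∧ (h = h₀ ∨ h = h₀ᶜ) := by
      intro c hcD hsep h hh
      have hhW : h ∈ W := hW c hcD hh
      have hseph := hsep h hh
      by_cases hh0 : h ∈ Hxy W x y
      · exact ⟨h, hh0, fun hz => (hseph.mp hz) (hHu hh0), Or.inl rfl⟩
      · by_cases hhc : hᶜ ∈ Hxy W x y
        · have hhu : h ∉ u := by
            rintro (h1 | ⟨h2, h3⟩)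
            · exact hh0 h1
            · exact h3 hhc
          have hhz : h ∈ z := hseph.mpr hhu
          exact ⟨hᶜ, hhc, (hzUF.2.1 h hhW).mp hhz, Or.inr (compl_compl h).symm⟩
        · exfalso
          by_cases hhz : h ∈ z
          · exact (hseph.mp hhz) (Or.inr ⟨hhz, hhc⟩)
          · have hhu : h ∉ u := by
              rintro (h1 | ⟨h2, h3⟩)
              exacts [hh0 h1, hhz h2]
            exact hhz (hseph.mpr hhu)
    -- non-distant walls come with long separating chains crossing them
    have hnd : ∀ h₀ ∈ Hxy W x y, h₀ ∉ z →
        ∃ c₀ ∈ D, Seps x y c₀ ∧ (∀ w ∈ c₀, Crosses w h₀) ∧ (L : ℕ∞) < c₀.encard := by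
      intro h₀ hh0 hh0z
      by_contra hcon
      push_neg at hcon
      exact hh0z (hzI ⟨hh0, fun c hc _ hsep hcr => hcon c hc hsep hcr⟩)
    have useChain : ∀ c ∈ D, ∀ h₀ k₀ h k, h ∈ c → k ∈ c →
        h₀ ∈ Hxy W x y → k₀ ∈ Hxy W x y → k₀ ∉ z →
        (h = h₀ ∨ h = h₀ᶜ) → (k = k₀ ∨ k = k₀ᶜ) → h₀ ⊆ k₀ → False := by
      intro c hcD h₀ k₀ h k hh hk hh0 hk0 hk0z hhor hkor hsubhk
      obtain ⟨c₀, hc₀D, hsep₀, hcr₀, hlen⟩ := hnd k₀ hk0 hk0z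
      have hfun : ∀ w ∈ c₀, Crosses w h ∧ Crosses w k := by
        intro w hw
        have cw2 : Crosses w k₀ := hcr₀ w hw
        have cw1 : Crosses w h₀ := cross_of_subset WC hxUF hyUF (hHW hh0)
          (hHx _ hh0) (hHy _ hh0) hsubhk (hW c₀ hc₀D hw) (hsep₀ w hw) cw2
        constructor
        · rcases hhor with rfl | rfl
          exacts [cw1, crosses_compl_right cw1]
        · rcases hkor with rfl | rfl
          exacts [cw2, crosses_compl_right cw2]
      exact absurd (hLC c hcD h hh k hk c₀ hc₀D hfun) (not_le.mpr hlen)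
    -- chains separating z from u are subsingletons
    have hss : ∀ c ∈ D, Seps z u c → c.Subsingleton := by
      intro c hcD hsep h hh k hk
      by_contra hne
      obtain ⟨h₀, hh0, hh0z, hhor⟩ := hwall c hcD hsep h hh
      obtain ⟨k₀, hk0, hk0z, hkor⟩ := hwall c hcD hsep k hk
      obtain ⟨σ, hσmem, hσord⟩ := hchain c hcD
      have hh0W : h₀ ∈ W := hHW hh0
      have hk0W : k₀ ∈ W := hHW hk0
      have hσh : σ h = h₀ ∨ σ h = h₀ᶜ := by
        rcases hσmem h hh with e | e <;> rcases hhor with rfl | rfl <;>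
          simp only [e, compl_compl] <;> tauto
      have hσk : σ k = k₀ ∨ σ k = k₀ᶜ := by
        rcases hσmem k hk with e | e <;> rcases hkor with rfl | rfl <;>
          simp only [e, compl_compl] <;> tauto
      have hkill1 : ¬ (h₀ ⊆ k₀ᶜ) := fun hs =>
        uf_compl_not_mem hxUF (hHx _ hk0) (uf_up hxUF (hHx _ hh0) (WC _ hk0W) hs)
      have hkill2 : ¬ (h₀ᶜ ⊆ k₀) := fun hs =>
        hh0z (uf_up hzUF (uf_compl_mem hzUF hk0W hk0z) hh0W (compl_subset_comm.mp hs))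
      rcases hσord h hh k hk hne with hlt | hlt
      · have hsub' : σ h ⊆ σ k := hlt.1
        rcases hσh with eh | eh <;> rcases hσk with ek | ek <;>
          rw [eh, ek] at hsub'
        · exact useChain c hcD h₀ k₀ h k hh hk hh0 hk0 hk0z hhor hkor hsub'
        · exact hkill1 hsub'
        · exact hkill2 hsub'
        · exact useChain c hcD k₀ h₀ k h hk hh hk0 hh0 hh0z hkor hhor
            (compl_subset_compl.mp hsub')
      · have hsub' : σ k ⊆ σ h := hlt.1
        rcases hσh with eh | eh <;> rcases hσk with ek | ek <;>
          rw [eh, ek] at hsub'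
        · exact useChain c hcD k₀ h₀ k h hk hh hk0 hh0 hh0z hkor hhor hsub'
        · exact hkill2 (compl_subset_comm.mpr hsub')
        · exact hkill1 (subset_compl_comm.mp hsub')
        · exact useChain c hcD h₀ k₀ h k hh hk hh0 hk0 hk0z hhor hkor
            (compl_subset_compl.mp hsub')
    have hdzu : dD D z u ≤ (1 : ℕ∞) := by
      rw [dD]
      exact iSup_le fun c => iSup_le fun hc => Set.encard_le_one_iff.mpr (fun a b ha hb => hss c hc.1 hc.2 ha hb)
    have hufin : ∀ s : Z, dD D u (pUF W s) < ⊤ := by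
      intro s
      have hbound : dD D u (pUF W s) ≤ dD D z (pUF W s) + 1 := by
        rw [dD]
        refine iSup_le fun c => iSup_le fun hc => ?_
        obtain ⟨hcD, hsep⟩ := hc
        set c₁ : Set (Set Z) := {h ∈ c | (h ∈ z ↔ h ∉ pUF W s)} with hc₁
        have hc₁c : c₁ ⊆ c := sep_subset _ _
        have h₁D : c₁ ∈ D := hsub c hcD c₁ hc₁c
        have h₂D : c \ c₁ ∈ D := hsub c hcD _ diff_subset
        have hsep₁ : Seps z (pUF W s) c₁ := fun h hh => hh.2
        have hsep₂ : Seps z u (c \ c₁) := by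
          intro h hh
          have h1 := hsep h hh.1
          have h2 : ¬ (h ∈ z ↔ h ∉ pUF W s) := fun hiff => hh.2 ⟨hh.1, hiff⟩
          tauto
        have e1 : c₁.encard ≤ dD D z (pUF W s) := by
          rw [dD]
          exact le_iSup₂_of_le c₁ ⟨h₁D, hsep₁⟩ le_rfl
        have e2 : (c \ c₁).encard ≤ 1 :=
          Set.encard_le_one_iff.mpr (fun a b ha hb => hss _ h₂D hsep₂ ha hb)
        calc c.encard = (c₁ ∪ (c \ c₁)).encard := by rw [union_diff_cancel hc₁c]
          _ ≤ c₁.encard + (c \ c₁).encard := Set.encard_union_le _ _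
          _ ≤ dD D z (pUF W s) + 1 := add_le_add e1 e2
      refine lt_of_le_of_lt hbound ?_
      have h1 : dD D z (pUF W s) ≠ ⊤ := (hzfin s).ne
      exact lt_top_iff_ne_top.mpr (WithTop.add_ne_top.mpr ⟨h1, ENat.one_ne_top⟩)
    exact ⟨u, ⟨⟨huUF, hufin⟩, hHu⟩, hdzu⟩

end AuxStatement15

section AuxStructural

variable (T : Fin m → Type v) [∀ i, MetricSpace (T i)] (K : Fin m → ℝ)
  (f : X → ∀ i, T i)

lemma indWalls_wallClosed : WallClosed (indWalls T K f) := by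
  rintro A ⟨i, h, hmem, (rfl | rfl)⟩
  · exact ⟨i, h, hmem, Or.inr rfl⟩
  · exact ⟨i, h, hmem, Or.inl (compl_compl _)⟩

lemma bigC_subset_W {L : ℕ} : ∀ c ∈ bigC T K f L, c ⊆ indWalls T K f := by
  rintro c ⟨⟨⟨e, he, rfl⟩, -⟩, -⟩ A hA
  obtain ⟨i, hAi⟩ := mem_iUnion.mp hA
  obtain ⟨d, hd, hde⟩ := he i
  rw [hde] at hAi
  obtain ⟨h, hhd, rfl⟩ := hAi
  obtain ⟨-, β, hβ, -⟩ := hd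
  exact ⟨i, h, ⟨β h, hβ h hhd⟩, Or.inl rfl⟩

lemma isChain'_subset {Z : Type*} {c c' : Set (Set Z)} (h : IsChain' c)
    (hsub : c' ⊆ c) : IsChain' c' := by
  obtain ⟨σ, h1, h2⟩ := h
  exact ⟨σ, fun a ha => h1 a (hsub ha), fun a ha b hb => h2 a (hsub ha) b (hsub hb)⟩

lemma disparateChains_subset_closed {T' : Type*} [MetricSpace T'] {K' : ℝ}
    {c c' : Set (Set T')} (h : c ∈ disparateChains T' K') (hsub : c' ⊆ c) :
    c' ∈ disparateChains T' K' := by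
  obtain ⟨hch, β, hβ1, hβ2⟩ := h
  exact ⟨isChain'_subset hch hsub, β, fun a ha => hβ1 a (hsub ha),
    fun a ha b hb => hβ2 a (hsub ha) b (hsub hb)⟩

lemma bigC_subset_closed {L : ℕ} :
    ∀ c ∈ bigC T K f L, ∀ c' ⊆ c, c' ∈ bigC T K f L := by
  rintro c ⟨⟨⟨e, he, rfl⟩, hch⟩, hLC⟩ c' hsub
  refine ⟨⟨⟨fun i => e i ∩ c', fun i => ?_, ?_⟩, isChain'_subset hch hsub⟩,
    fun h hh k hk d' hd' hcr => hLC h (hsub hh) k (hsub hk) d' hd' hcr⟩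
  · obtain ⟨d, hd, hde⟩ := he i
    refine ⟨{h ∈ d | indHalf T K f i h ∈ c'},
      disparateChains_subset_closed hd (sep_subset _ _), ?_⟩
    simp only [hde]
    ext A
    simp only [mem_image, mem_inter_iff, Set.mem_sep_iff]
    constructor
    · rintro ⟨⟨h, hh, rfl⟩, hA⟩; exact ⟨h, ⟨hh, hA⟩, rfl⟩
    · rintro ⟨h, ⟨hh, hA⟩, rfl⟩; exact ⟨⟨h, hh, rfl⟩, hA⟩
  · rw [← Set.iUnion_inter, inter_eq_self_of_subset_right hsub]

end AuxStructural

/-- Lemma 5.4.  In the dual space `S_C`, for every `x,y ∈ S_C` one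
has `[x,y] ⊆ I(x,y) ⊆ N([x,y],1)`, where `N(·,1)` is the closed `1`-neighbourhood in
the metric `d_C`, and `I(x,y)` is the intersection of the halfspaces determined by the
distant walls (monochromaticity being membership in some induced `Dᵢ`). -/
theorem interval_and_Ixy_close
    {G : Type w} [Group G] {X : Type u}
    (ρ : G →* Equiv.Perm X) (dX : X → X → ℝ) (μX : X → X → X → X)
    (δ lam cc : ℝ) {m : ℕ} (T : Fin m → Type u) [∀ i, MetricSpace (T i)]
    (K : Fin m → ℝ) (μT : ∀ i, T i → T i → T i → T i)
    (f : X → ∀ i, T i) (α : G →* Equiv.Perm (∀ i, T i))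
    (hδ : 0 ≤ δ)
    (hhypX : IsHyp dX δ) (hrgX : RGSpace dX δ) (hmedX : IsCoarseMedian dX μX δ)
    (hisoX : ∀ (g : G) (x y : X), dX (ρ g x) (ρ g y) = dX x y)
    (hqt : ∀ i, IsQuasitree (fun a b : T i => dist a b) lam)
    (hhypT : ∀ i, IsHyp (fun a b : T i => dist a b) δ)
    (hK : ∀ i, 100 * δ < K i)
    (hdisc : ∀ (i : Fin m) (t : T i), ¬ IsPreconnected (closedBall t (K i))ᶜ)
    (hmedT : ∀ i, IsCoarseMedian (fun a b : T i => dist a b) (μT i) cc)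
    (hqie : IsQIE dX (l1distF fun i (a b : T i) => dist a b) f lam)
    (hqm : ∀ x y z : X,
      l1distF (fun i (a b : T i) => dist a b)
        (fun i => μT i (f x i) (f y i) (f z i)) (f (μX x y z)) ≤ cc)
    (hisoA : ∀ (g : G) (p q : ∀ i, T i),
      l1distF (fun i (a b : T i) => dist a b) (α g p) (α g q)
        = l1distF (fun i (a b : T i) => dist a b) p q)
    (hequiv : ∀ (g : G) (x : X), f (ρ g x) = α g (f x))
    (L : ℕ)
    (hgrid : ∀ (i j : Fin m) (d₁ d₂ : Set (Set (SProd T K f))),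
      d₁ ∈ indMono T K f i → d₂ ∈ indMono T K f j →
      (∀ w₁ ∈ d₁, ∀ w₂ ∈ d₂, Crosses w₁ w₂) →
      min d₁.encard d₂.encard ≤ (L : ℕ∞))
    :
    ∀ x y : Set (Set (SProd T K f)),
      x ∈ dualSpace (indWalls T K f) (bigC T K f L) →
      y ∈ dualSpace (indWalls T K f) (bigC T K f L) →
      interval (indWalls T K f) (bigC T K f L) x y ⊆
        Ixy (indWalls T K f) (bigC T K f L) (fun c => ∃ i, c ∈ indMono T K f i) L x y ∧
      ∀ z ∈ Ixy (indWalls T K f) (bigC T K f L)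
          (fun c => ∃ i, c ∈ indMono T K f i) L x y,
        ∃ u ∈ interval (indWalls T K f) (bigC T K f L) x y,
          dD (bigC T K f L) z u ≤ (1 : ℕ∞) := by
  intro x y hx hy
  exact abstract_main (indWalls_wallClosed T K f) (bigC_subset_W T K f)
    (bigC_subset_closed T K f) (fun c hc => hc.1.2)
    (fun c hc h hh k hk d' hd' => hc.2 h hh k hk d' hd'.1) x y hx hy

end GSC
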